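/- Let B^{(n)}_{i,j} = (stxy)^i(st+xy)^j(tx+sy)^{n+1-2i-j} with n+1-2i-j ≥ 0. Then stxy·(∂²/∂s∂t + ∂²/∂x∂y)B^{(n)}_{i,j} = i(n+1-i-j)·B^{(n+1)}_{i,j+1} + j(2n+3-j)·B^{(n+1)}_{i+1,j-1} + (n+1-2i-j)(n-2i-j)·B^{(n+1)}_{i+1,j+1}. -/
import Mathlib


open MvPolynomial

private lemma pderiv_natCast' (v : Fin 4) (m : ℕ) :
    pderiv v ((m : MvPolynomial (Fin 4) ℤ)) = 0 := by
  rw [← map_natCast (C : ℤ →+* MvPolynomial (Fin 4) ℤ), pderiv_C]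

private lemma pd01 : pderiv (0:Fin 4) (X 1 : MvPolynomial (Fin 4) ℤ) = 0 := pderiv_X_of_ne (by decide)
private lemma pd02 : pderiv (0:Fin 4) (X 2 : MvPolynomial (Fin 4) ℤ) = 0 := pderiv_X_of_ne (by decide)
private lemma pd03 : pderiv (0:Fin 4) (X 3 : MvPolynomial (Fin 4) ℤ) = 0 := pderiv_X_of_ne (by decide)
private lemma pd10 : pderiv (1:Fin 4) (X 0 : MvPolynomial (Fin 4) ℤ) = 0 := pderiv_X_of_ne (by decide)
private lemma pd12 : pderiv (1:Fin 4) (X 2 : MvPolynomial (Fin 4) ℤ) = 0 := pderiv_X_of_ne (by decide)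
private lemma pd13 : pderiv (1:Fin 4) (X 3 : MvPolynomial (Fin 4) ℤ) = 0 := pderiv_X_of_ne (by decide)
private lemma pd20 : pderiv (2:Fin 4) (X 0 : MvPolynomial (Fin 4) ℤ) = 0 := pderiv_X_of_ne (by decide)
private lemma pd21 : pderiv (2:Fin 4) (X 1 : MvPolynomial (Fin 4) ℤ) = 0 := pderiv_X_of_ne (by decide)
private lemma pd23 : pderiv (2:Fin 4) (X 3 : MvPolynomial (Fin 4) ℤ) = 0 := pderiv_X_of_ne (by decide)
private lemma pd30 : pderiv (3:Fin 4) (X 0 : MvPolynomial (Fin 4) ℤ) = 0 := pderiv_X_of_ne (by decide)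
private lemma pd31 : pderiv (3:Fin 4) (X 1 : MvPolynomial (Fin 4) ℤ) = 0 := pderiv_X_of_ne (by decide)
private lemma pd32 : pderiv (3:Fin 4) (X 2 : MvPolynomial (Fin 4) ℤ) = 0 := pderiv_X_of_ne (by decide)

set_option maxHeartbeats 4000000 in
private lemma key (i j k : ℕ) :
    (X 0 * X 1 * X 2 * X 3 : MvPolynomial (Fin 4) ℤ) *
        (pderiv 0 (pderiv 1
            ((X 0 * X 1 * X 2 * X 3) ^ i * (X 0 * X 1 + X 2 * X 3) ^ j *
              (X 1 * X 2 + X 0 * X 3) ^ k)) +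
         pderiv 2 (pderiv 3
            ((X 0 * X 1 * X 2 * X 3) ^ i * (X 0 * X 1 + X 2 * X 3) ^ j *
              (X 1 * X 2 + X 0 * X 3) ^ k))) =
      C ((i : ℤ) * ((i : ℤ) + (k : ℤ))) *
          ((X 0 * X 1 * X 2 * X 3) ^ i * (X 0 * X 1 + X 2 * X 3) ^ (j + 1) *
            (X 1 * X 2 + X 0 * X 3) ^ k) +
        C ((j : ℤ) * (4 * (i : ℤ) + (j : ℤ) + 2 * (k : ℤ) + 1)) *
          ((X 0 * X 1 * X 2 * X 3) ^ (i + 1) * (X 0 * X 1 + X 2 * X 3) ^ (j - 1) *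
            (X 1 * X 2 + X 0 * X 3) ^ k) +
        C ((k : ℤ) * ((k : ℤ) - 1)) *
          ((X 0 * X 1 * X 2 * X 3) ^ (i + 1) * (X 0 * X 1 + X 2 * X 3) ^ (j + 1) *
            (X 1 * X 2 + X 0 * X 3) ^ (k - 2)) := by
  rcases i with _ | _ | i <;> rcases j with _ | _ | j <;> rcases k with _ | _ | k <;>
    · simp only [Nat.succ_eq_add_one, pderiv_mul, pderiv_pow, map_add, pderiv_X_self,
        pderiv_natCast', pderiv_one, map_zero, pd01, pd02, pd03, pd10, pd12, pd13, pd20, pd21, pd23, pd30, pd31, pd32,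
        Nat.add_sub_cancel, Nat.zero_sub,
        show ∀ m : ℕ, m + 1 + 1 - 2 = m from fun _ => rfl,
        show ∀ m : ℕ, m + 1 - 2 = m - 1 from fun _ => rfl,
        show (0:ℕ) - 2 = 0 from rfl, pow_zero,
        map_mul, map_sub, map_one, map_natCast, map_ofNat,
        mul_zero, zero_mul, add_zero, zero_add, mul_one, one_mul]
      push_cast
      ring

/-- The basis element `B^(n)_{i,j} = (stxy)^i (st+xy)^j (tx+sy)^(n+1-2i-j)`,
with `s = X 0`, `t = X 1`, `x = X 2`, `y = X 3`. -/
noncomputable def Bbasis (n i j : ℕ) : MvPolynomial (Fin 4) ℤ :=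
  (X 0 * X 1 * X 2 * X 3) ^ i * (X 0 * X 1 + X 2 * X 3) ^ j *
    (X 1 * X 2 + X 0 * X 3) ^ (n + 1 - 2 * i - j)

set_option maxHeartbeats 4000000 in
theorem stmt_11 (n i j : ℕ) (h : 2 * i + j ≤ n + 1) :
    X 0 * X 1 * X 2 * X 3 *
        (pderiv 0 (pderiv 1 (Bbasis n i j)) + pderiv 2 (pderiv 3 (Bbasis n i j))) =
      C ((i : ℤ) * ((n : ℤ) + 1 - i - j)) * Bbasis (n + 1) i (j + 1) +
        C ((j : ℤ) * (2 * (n : ℤ) + 3 - j)) * Bbasis (n + 1) (i + 1) (j - 1) +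
        C (((n : ℤ) + 1 - 2 * i - j) * ((n : ℤ) - 2 * i - j)) *
          Bbasis (n + 1) (i + 1) (j + 1) := by
  obtain ⟨k, hk⟩ : ∃ k, n + 1 = 2 * i + j + k := ⟨n + 1 - 2 * i - j, by omega⟩
  have hn : (n : ℤ) = 2 * (i : ℤ) + (j : ℤ) + (k : ℤ) - 1 := by omega
  simp only [Bbasis]
  rcases j with _ | j
  · rw [show n + 1 - 2 * i - 0 = k from by omega,
        show n + 1 + 1 - 2 * i - (0 + 1) = k from by omega,
        show n + 1 + 1 - 2 * (i + 1) - (0 - 1) = k - 1 from by omega,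
        show n + 1 + 1 - 2 * (i + 1) - (0 + 1) = k - 2 from by omega,
        key i 0 k, hn]
    simp only [map_mul, map_add, map_sub, map_one, map_natCast, map_ofNat]
    push_cast
    ring
  · rw [show n + 1 - 2 * i - (j + 1) = k from by omega,
        show n + 1 + 1 - 2 * i - (j + 1 + 1) = k from by omega,
        show n + 1 + 1 - 2 * (i + 1) - (j + 1 - 1) = k from by omega,
        show n + 1 + 1 - 2 * (i + 1) - (j + 1 + 1) = k - 2 from by omega,
        key i (j + 1) k, hn]
    simp only [map_mul, map_add, map_sub, map_one, map_natCast, map_ofNat]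
    push_cast
    ring
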